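/- arXiv:2202.13439 — 2 statements merged into one kernel-verified Lean document; each statement's English description precedes it below -/
import Mathlib

section
/- Let G be a Polish group and A an abelian Polish group, and suppose G acts on A by automorphisms of the abstract group A (i.e., there is a group action of G on A such that for each g ∈ G the map a ↦ g·a is an additive group automorphism of A). If the action map G × A → A, (g, a) ↦ g·a, is Borel measurable, then it is continuous. -/
open Filter Topology Set
open scoped Pointwise

section Aux

/-- A Polish space is a Baire space. -/
theorem aux_polish_baire (X : Type*) [TopologicalSpace X] [PolishSpace X] : BaireSpace X := by
  infer_instance

/-- Preimage of a residual set under a homeomorphism is residual. -/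
theorem aux_residual_preimage {X Y : Type*} [TopologicalSpace X] [TopologicalSpace Y]
    (h : X ≃ₜ Y) {s : Set Y} (hs : s ∈ residual Y) : h ⁻¹' s ∈ residual X := by
  rw [← h.residual_map_eq] at hs
  exact hs

/-- In a Baire space, a nonempty open set is not meager. -/
theorem aux_open_nonmeagre {X : Type*} [TopologicalSpace X] [BaireSpace X] {U : Set X}
    (hU : IsOpen U) (hne : U.Nonempty) : ¬ IsMeagre U := by
  intro h
  have : Dense Uᶜ := dense_of_mem_residual h
  rcases hne with ⟨x, hx⟩
  rcases (this.inter_open_nonempty U hU ⟨x, hx⟩) with ⟨y, hyU, hyc⟩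
  exact hyc hyU

/-- Pettis' theorem, difference-set version, for abelian topological groups. -/
theorem aux_pettis {B : Type*} [AddCommGroup B] [TopologicalSpace B] [IsTopologicalAddGroup B]
    [BaireSpace B] {S : Set B} (hS : BaireMeasurableSet S) (hnm : ¬ IsMeagre S) :
    S - S ∈ 𝓝 (0 : B) := by
  obtain ⟨U, hUo, hSU⟩ := hS.residualEq_isOpen
  have hR : {x | (x ∈ S) = (x ∈ U)} ∈ residual B := hSU
  rcases U.eq_empty_or_nonempty with rfl | ⟨x₀, hx₀⟩
  · exfalso
    apply hnm
    refine Filter.mem_of_superset hR ?_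
    intro x hx
    simp only [mem_setOf_eq, mem_empty_iff_false, eq_iff_iff, iff_false] at hx
    exact hx
  -- the open set (· - x₀) '' U is a neighborhood of 0 contained in S - S
  have key : ∀ t ∈ (fun u => u - x₀) '' U, t ∈ S - S := by
    rintro t ⟨u₀, hu₀, rfl⟩
    set t := u₀ - x₀ with ht
    -- translate: x ∈ t + S ↔ -t + x ∈ S
    have hτ : (fun x => -t + x) ⁻¹' {x | (x ∈ S) = (x ∈ U)} ∈ residual B :=
      aux_residual_preimage (Homeomorph.addLeft (-t)) hR
    have hden : Dense ({x | (x ∈ S) = (x ∈ U)} ∩ (fun x => -t + x) ⁻¹' {x | (x ∈ S) = (x ∈ U)}) :=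
      dense_of_mem_residual (Filter.inter_mem hR hτ)
    have hOo : IsOpen (U ∩ (fun x => -t + x) ⁻¹' U) :=
      hUo.inter (hUo.preimage (by continuity))
    have hOne : (U ∩ (fun x => -t + x) ⁻¹' U).Nonempty := by
      refine ⟨u₀, hu₀, ?_⟩
      simp only [mem_preimage, ht]
      have : -(u₀ - x₀) + u₀ = x₀ := by abel
      rw [this]; exact hx₀
    rcases hden.inter_open_nonempty _ hOo hOne with ⟨s, ⟨hsU, hsU'⟩, hsR, hsR'⟩
    have hsS : s ∈ S := by
      have := hsR; simp only [mem_setOf_eq, eq_iff_iff] at this; exact this.mpr hsU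
    have hsS' : -t + s ∈ S := by
      have := hsR'; simp only [mem_preimage, mem_setOf_eq, eq_iff_iff] at this
      exact this.mpr hsU'
    refine ⟨s, hsS, -t + s, hsS', ?_⟩
    simp only [ht]
    abel
  have hmem : (0 : B) ∈ (fun u => u - x₀) '' U := ⟨x₀, hx₀, by show x₀ - x₀ = 0; abel⟩
  have hopen : IsOpen ((fun u => u - x₀) '' U) := by
    have : (fun u => u - x₀) '' U = (fun x => x + x₀) ⁻¹' U := by
      ext x
      constructor
      · rintro ⟨u, hu, rfl⟩; simpa using hu
      · intro hx; exact ⟨x + x₀, hx, add_sub_cancel_right _ _⟩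
    rw [this]
    exact hUo.preimage (by continuity)
  exact Filter.mem_of_superset (hopen.mem_nhds hmem) key

/-- A Borel-measurable additive homomorphism from a Baire topological group to a
separable topological group is continuous. -/
theorem aux_measurable_addHom_continuous {B C : Type*}
    [AddCommGroup B] [TopologicalSpace B] [IsTopologicalAddGroup B] [BaireSpace B]
    [MeasurableSpace B] [BorelSpace B]
    [AddCommGroup C] [TopologicalSpace C] [IsTopologicalAddGroup C]
    [TopologicalSpace.SeparableSpace C] [MeasurableSpace C] [BorelSpace C]
    (φ : B →+ C) (hφ : Measurable φ) : Continuous φ := by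
  apply continuous_of_continuousAt_zero φ
  rw [ContinuousAt, map_zero]
  intro W hW
  rw [Filter.mem_map]
  -- find open V ∋ 0 with V - V ⊆ W
  obtain ⟨V, hVW, hVo, hV0⟩ : ∃ V : Set C, V - V ⊆ W ∧ IsOpen V ∧ (0 : C) ∈ V := by
    have hc : ContinuousAt (fun p : C × C => p.1 - p.2) (0, 0) := (continuous_sub).continuousAt
    have : (fun p : C × C => p.1 - p.2) ⁻¹' W ∈ 𝓝 ((0 : C), (0 : C)) := by
      apply hc; simpa using hW
    rw [nhds_prod_eq, Filter.mem_prod_iff] at this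
    obtain ⟨V₁, hV₁, V₂, hV₂, hsub⟩ := this
    obtain ⟨V₁', hV₁'sub, hV₁'o, hV₁'0⟩ := mem_nhds_iff.mp hV₁
    obtain ⟨V₂', hV₂'sub, hV₂'o, hV₂'0⟩ := mem_nhds_iff.mp hV₂
    refine ⟨V₁' ∩ V₂', ?_, hV₁'o.inter hV₂'o, ⟨hV₁'0, hV₂'0⟩⟩
    rintro x ⟨a, ha, b, hb, rfl⟩
    exact hsub (Set.mk_mem_prod (hV₁'sub ha.1) (hV₂'sub hb.2))
  -- countable dense set
  obtain ⟨D, hDc, hDd⟩ := TopologicalSpace.exists_countable_dense C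
  -- the preimages of d + V cover B
  have hcover : ⋃ d ∈ D, (⇑φ) ⁻¹' ((d + ·) '' V) = univ := by
    ext b
    simp only [mem_iUnion, mem_preimage, mem_univ, iff_true]
    have : ((φ b - ·) '' V).Nonempty ∧ IsOpen ((φ b - ·) '' V) := by
      constructor
      · exact ⟨_, ⟨0, hV0, rfl⟩⟩
      · have : (φ b - ·) '' V = (fun x => φ b - x) '' V := rfl
        rw [this, Set.image_eq_preimage_of_inverse (g := fun x => φ b - x)
          (by intro x; simp [sub_sub_cancel]) (by intro x; simp [sub_sub_cancel])]
        exact hVo.preimage (by continuity)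
    obtain ⟨⟨_, hne⟩, hop⟩ := this
    rcases hDd.inter_open_nonempty _ hop ⟨_, hne⟩ with ⟨d, ⟨v, hv, hdv⟩, hdD⟩
    refine ⟨d, hdD, ⟨φ b - d, by rw [← hdv]; simpa using hv, ?_⟩⟩
    show d + (φ b - d) = φ b
    abel
  -- some piece is nonmeager
  have hnm : ∃ d ∈ D, ¬ IsMeagre ((⇑φ) ⁻¹' ((d + ·) '' V)) := by
    by_contra h
    push_neg at h
    have : IsMeagre (⋃ d ∈ D, (⇑φ) ⁻¹' ((d + ·) '' V)) := by
      rw [Set.biUnion_eq_iUnion]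
      haveI : Countable D := hDc.to_subtype
      unfold IsMeagre
      rw [Set.compl_iUnion]
      exact countable_iInter_mem.mpr fun i => h i i.2
    rw [hcover] at this
    exact aux_open_nonmeagre isOpen_univ ⟨0, trivial⟩ this
  obtain ⟨d, _, hdnm⟩ := hnm
  set S := (⇑φ) ⁻¹' ((d + ·) '' V) with hSdef
  have hSmeas : MeasurableSet S := by
    apply hφ
    have : (d + ·) '' V = (fun x => -d + x) ⁻¹' V := by
      ext x; constructor
      · rintro ⟨v, hv, rfl⟩; show -d + (d + v) ∈ V; simpa using hv
      · intro hx; exact ⟨-d + x, hx, by show d + (-d + x) = x; abel⟩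
    rw [this]
    exact (hVo.preimage (by continuity)).measurableSet
  have hSS : S - S ∈ 𝓝 (0 : B) := aux_pettis hSmeas.baireMeasurableSet hdnm
  refine Filter.mem_of_superset hSS ?_
  rintro x ⟨a, ha, b, hb, rfl⟩
  obtain ⟨va, hva, hva'⟩ := ha
  obtain ⟨vb, hvb, hvb'⟩ := hb
  have heq : φ (a - b) = va - vb := by
    rw [map_sub, ← hva', ← hvb']
    show (d + va) - (d + vb) = va - vb
    abel
  exact hVW ⟨va, hva, vb, hvb, heq.symm⟩

/-- A Borel-measurable function into a second-countable space is continuous on a residual set. -/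
theorem aux_continuousOn_residual {X Y : Type*} [TopologicalSpace X]
    [MeasurableSpace X] [BorelSpace X] [TopologicalSpace Y]
    [MeasurableSpace Y] [BorelSpace Y] [SecondCountableTopology Y]
    {f : X → Y} (hf : Measurable f) : ∃ M ∈ residual X, ContinuousOn f M := by
  obtain ⟨B, hBc, -, hB⟩ := TopologicalSpace.exists_countable_basis Y
  have key : ∀ W ∈ B, ∃ U : Set X, IsOpen U ∧ (f ⁻¹' W) =ᵇ U := fun W hW =>
    ((hf (hB.isOpen hW).measurableSet).baireMeasurableSet).residualEq_isOpen
  choose! U hUo hUeq using key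
  set M : Set X := {x | ∀ W ∈ B, ((x ∈ f ⁻¹' W) ↔ (x ∈ U W))} with hMdef
  have hM : M ∈ residual X := by
    have : M = ⋂ W ∈ B, {x | (x ∈ f ⁻¹' W) ↔ (x ∈ U W)} := by
      ext x; simp [hMdef]
    rw [this]
    refine (countable_bInter_mem hBc).mpr fun W hW => ?_
    refine Filter.mem_of_superset (hUeq W hW) ?_
    intro x hx
    exact eq_iff_iff.mp hx
  refine ⟨M, hM, ?_⟩
  intro x hx
  intro N hN
  obtain ⟨W, hWB, hfxW, hWN⟩ := hB.mem_nhds_iff.mp hN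
  have hxU : x ∈ U W := (hx W hWB).mp hfxW
  rw [Filter.mem_map, mem_nhdsWithin_iff_exists_mem_nhds_inter]
  refine ⟨U W, (hUo W hWB).mem_nhds hxU, ?_⟩
  rintro y ⟨hyU, hyM⟩
  exact hWN ((hyM W hWB).mpr hyU)

end Aux

/-- A Borel-measurable action of a Polish group `G` by additive automorphisms on an abelian
Polish group `A` is continuous. -/
theorem statement16
    {G A : Type*}
    [Group G] [TopologicalSpace G] [IsTopologicalGroup G] [PolishSpace G]
    [MeasurableSpace G] [BorelSpace G]
    [AddCommGroup A] [TopologicalSpace A] [IsTopologicalAddGroup A] [PolishSpace A]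
    [MeasurableSpace A] [BorelSpace A]
    [DistribMulAction G A]
    (hmeas : Measurable fun p : G × A => p.1 • p.2) :
    Continuous fun p : G × A => p.1 • p.2 := by
  haveI : BaireSpace A := aux_polish_baire A
  haveI : BaireSpace (G × A) := aux_polish_baire (G × A)
  -- Step 1: each individual map `a ↦ h • a` is continuous (Pettis).
  have hsep : ∀ h : G, Continuous fun a : A => h • a := by
    intro h
    have : Measurable fun a : A => h • a :=
      hmeas.comp (measurable_const.prodMk measurable_id)
    exact aux_measurable_addHom_continuous (DistribMulAction.toAddMonoidHom A h) this
  -- Step 2: the action map is continuous on a residual subset of G × A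
  obtain ⟨M, hM, hMcont⟩ := aux_continuousOn_residual hmeas
  -- Step 3: sequential continuity
  apply SeqContinuous.continuous
  intro p q hp_seq
  set g : ℕ → G := fun n => (p n).1 with hg
  set x : ℕ → A := fun n => (p n).2 with hx
  -- translation homeomorphisms
  set τ : G → A → (G × A ≃ₜ G × A) := fun c d =>
    (Homeomorph.mulRight c).prodCongr (Homeomorph.addRight d) with hτ
  have hτmem : ∀ (c : G) (d : A), (τ c d) ⁻¹' M ∈ residual (G × A) := fun c d =>
    aux_residual_preimage (τ c d) hM
  -- choose (h, b) in the intersection of all relevant residual sets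
  have hKmem : (⋂ n : ℕ, ((τ (g n) (x n)) ⁻¹' M ∩ (τ (g n) 0) ⁻¹' M)) ∩
      ((τ q.1 q.2) ⁻¹' M ∩ (τ q.1 0) ⁻¹' M) ∈ residual (G × A) := by
    refine Filter.inter_mem ?_ (Filter.inter_mem (hτmem _ _) (hτmem _ _))
    exact countable_iInter_mem.mpr fun n => Filter.inter_mem (hτmem _ _) (hτmem _ _)
  obtain ⟨⟨h, b⟩, hhb⟩ : (((⋂ n : ℕ, ((τ (g n) (x n)) ⁻¹' M ∩ (τ (g n) 0) ⁻¹' M)) ∩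
      ((τ q.1 q.2) ⁻¹' M ∩ (τ q.1 0) ⁻¹' M)).Nonempty) :=
    (dense_of_mem_residual hKmem).nonempty
  obtain ⟨hhb1, hhb2, hhb3⟩ := hhb
  have hmemn : ∀ n : ℕ, (h * g n, b + x n) ∈ M ∧ (h * g n, b + 0) ∈ M := by
    intro n
    have := Set.mem_iInter.mp hhb1 n
    exact ⟨this.1, this.2⟩
  -- convergence of auxiliary sequences
  have htend1 : Tendsto (fun n => (h * g n, b + x n)) atTop (𝓝 (h * q.1, b + q.2)) := by
    have h1 : Tendsto g atTop (𝓝 q.1) := (continuous_fst.tendsto q).comp hp_seq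
    have h2 : Tendsto x atTop (𝓝 q.2) := (continuous_snd.tendsto q).comp hp_seq
    exact ((tendsto_const_nhds.mul h1).prodMk_nhds (tendsto_const_nhds.add h2))
  have htend2 : Tendsto (fun n => (h * g n, b + 0)) atTop (𝓝 (h * q.1, b + 0)) := by
    have h1 : Tendsto g atTop (𝓝 q.1) := (continuous_fst.tendsto q).comp hp_seq
    exact ((tendsto_const_nhds.mul h1).prodMk_nhds tendsto_const_nhds)
  set F : G × A → A := fun p => p.1 • p.2 with hF
  have hc1 : Tendsto (fun n => F (h * g n, b + x n)) atTop (𝓝 (F (h * q.1, b + q.2))) := by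
    have hcw : ContinuousWithinAt F M (h * q.1, b + q.2) := hMcont _ hhb2
    apply hcw.tendsto.comp
    rw [tendsto_nhdsWithin_iff]
    exact ⟨htend1, Filter.Eventually.of_forall fun n => (hmemn n).1⟩
  have hc2 : Tendsto (fun n => F (h * g n, b + 0)) atTop (𝓝 (F (h * q.1, b + 0))) := by
    have hcw : ContinuousWithinAt F M (h * q.1, b + 0) := hMcont _ hhb3
    apply hcw.tendsto.comp
    rw [tendsto_nhdsWithin_iff]
    exact ⟨htend2, Filter.Eventually.of_forall fun n => (hmemn n).2⟩
  have hsub : Tendsto (fun n => F (h * g n, b + x n) - F (h * g n, b + 0)) atTop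
      (𝓝 (F (h * q.1, b + q.2) - F (h * q.1, b + 0))) := hc1.sub hc2
  have heq : ∀ (c : G) (d : A), F (h * c, b + d) - F (h * c, b + 0) = h • (c • d) := by
    intro c d
    simp only [hF, smul_add, add_zero, mul_smul]
    abel
  simp only [heq] at hsub
  -- apply h⁻¹ •
  have hinv : Tendsto (fun n => h⁻¹ • (h • (g n • x n))) atTop
      (𝓝 (h⁻¹ • (h • (q.1 • q.2)))) := ((hsep h⁻¹).tendsto _).comp hsub
  simp only [inv_smul_smul] at hinv
  exact hinv
end

section
/- Let R be a Polish topological ring and let A be an abelian Polish group equipped with an R-module structure (on the underlying abelian group of A). If the scalar multiplication map R × A → A, (λ, a) ↦ λ·a, is Borel measurable, then it is continuous. -/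
open Filter Topology Set TopologicalSpace

/-- A Borel-measurable function into a second-countable space is continuous on a
comeager set. -/
theorem exists_residual_continuousOn {X Y : Type*}
    [TopologicalSpace X] [MeasurableSpace X] [BorelSpace X]
    [TopologicalSpace Y] [SecondCountableTopology Y]
    [MeasurableSpace Y] [BorelSpace Y]
    {f : X → Y} (hf : Measurable f) : ∃ D ∈ residual X, ContinuousOn f D := by
  obtain ⟨B, hBc, -, hb⟩ := exists_countable_basis Y
  have key : ∀ V ∈ B, ∃ U : Set X, IsOpen U ∧ (f ⁻¹' V : Set X) =ᵇ U := fun V hV =>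
    ((hf (hb.isOpen hV).measurableSet).baireMeasurableSet).residualEq_isOpen
  choose! U hUo hUe using key
  refine ⟨{x | ∀ V ∈ B, (f x ∈ V ↔ x ∈ U V)}, ?_, ?_⟩
  · rw [show {x | ∀ V ∈ B, (f x ∈ V ↔ x ∈ U V)}
        = {x | ∀ V (hV : V ∈ B), (f x ∈ V ↔ x ∈ U V)} from rfl]
    have := (eventually_countable_ball (l := residual X)
      (p := fun x V (_ : V ∈ B) => (f x ∈ V ↔ x ∈ U V)) hBc).mpr ?_
    · exact this
    · intro V hV
      exact (hUe V hV).mono fun x hx => by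
        exact iff_of_eq hx
  · intro x hx
    refine ((hb.nhds_hasBasis (a := f x)).tendsto_right_iff).mpr ?_
    rintro V ⟨hVB, hfxV⟩
    have hxU : x ∈ U V := (hx V hVB).mp hfxV
    rw [eventually_iff, mem_nhdsWithin]
    exact ⟨U V, hUo V hVB, hxU, fun y ⟨hyU, hyD⟩ => (hyD V hVB).mpr hyU⟩

theorem aux_baire {X : Type*} [TopologicalSpace X] [PolishSpace X] : BaireSpace X := by
  letI := upgradeIsCompletelyMetrizable X
  infer_instance

theorem aux_seq {X : Type*} [TopologicalSpace X] [PolishSpace X] : SequentialSpace X := by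
  letI := upgradeIsCompletelyMetrizable X
  infer_instance

/-- A measurable additive homomorphism between Polish abelian groups is continuous. -/
theorem continuous_of_measurable_addHom {G H : Type*}
    [AddCommGroup G] [TopologicalSpace G] [IsTopologicalAddGroup G] [PolishSpace G]
    [MeasurableSpace G] [BorelSpace G]
    [AddCommGroup H] [TopologicalSpace H] [IsTopologicalAddGroup H] [PolishSpace H]
    [MeasurableSpace H] [BorelSpace H]
    {f : G → H} (hadd : ∀ x y, f (x + y) = f x + f y) (hf : Measurable f) :
    Continuous f := by
  haveI : BaireSpace G := aux_baire
  haveI : SequentialSpace G := aux_seq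
  have hf0 : f 0 = 0 := by
    have h := hadd 0 0
    simp only [add_zero] at h
    exact (right_eq_add.mp h).symm ▸ by
      have := h.symm
      simpa [eq_comm] using right_eq_add.mp h
  have hneg : ∀ x, f (-x) = - f x := by
    intro x
    have h := hadd x (-x)
    rw [add_neg_cancel, hf0] at h
    exact eq_neg_of_add_eq_zero_right h.symm
  have key : ∀ (u : ℕ → G) (p : G), Tendsto u atTop (𝓝 p) →
      Tendsto (fun n => f (u n)) atTop (𝓝 (f p)) := by
    intro u p hu
    obtain ⟨D, hD, hcont⟩ := exists_residual_continuousOn hf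
    have hpre : ∀ n, (fun y : G => y + (u n - p)) ⁻¹' D ∈ residual G := by
      intro n
      have h := (Homeomorph.addRight (u n - p)).residual_map_eq
      rw [← h] at hD
      exact hD
    have hT : (D ∩ ⋂ n, (fun y : G => y + (u n - p)) ⁻¹' D) ∈ residual G :=
      inter_mem hD ((countable_iInter_mem).mpr hpre)
    obtain ⟨y, hyD, hyI⟩ := (dense_of_mem_residual hT).nonempty
    have hyn : ∀ n, y + (u n - p) ∈ D := fun n => mem_iInter.mp hyI n
    have hlim : Tendsto (fun n => y + (u n - p)) atTop (𝓝 y) := by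
      have h : Tendsto (fun n => y + (u n - p)) atTop (𝓝 (y + (p - p))) :=
        tendsto_const_nhds.add (hu.sub tendsto_const_nhds)
      simpa using h
    have hlim' : Tendsto (fun n => y + (u n - p)) atTop (𝓝[D] y) :=
      tendsto_nhdsWithin_of_tendsto_nhds_of_eventually_within _ hlim
        (Eventually.of_forall hyn)
    have h2 : Tendsto (fun n => f (y + (u n - p))) atTop (𝓝 (f y)) :=
      Filter.Tendsto.comp (hcont y hyD) hlim'
    have heq : (fun n => f (y + (u n - p)))
        = fun n => f y + (f (u n) + f (-p)) := by
      funext n; rw [hadd, sub_eq_add_neg, hadd]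
    rw [heq] at h2
    have h3 : Tendsto (fun n => f y + (f (u n) + f (-p)) - f y - f (-p)) atTop
        (𝓝 (f y - f y - f (-p))) := (h2.sub tendsto_const_nhds).sub tendsto_const_nhds
    have hfun : (fun n => f (u n))
        = fun n => f y + (f (u n) + f (-p)) - f y - f (-p) := by
      funext n; abel
    have hfp : f p = f y - f y - f (-p) := by rw [hneg]; abel
    rw [hfun, hfp]
    exact h3
  have hs : SeqContinuous f := fun u p hu => key u p hu
  exact hs.continuous

/-- If `R` is a Polish topological ring and `A` an abelian Polish group with an `R`-module
structure whose scalar multiplication is Borel-measurable, then the scalar multiplication is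
continuous. -/
theorem statement17
    {R A : Type*}
    [Ring R] [TopologicalSpace R] [IsTopologicalRing R] [PolishSpace R]
    [MeasurableSpace R] [BorelSpace R]
    [AddCommGroup A] [TopologicalSpace A] [IsTopologicalAddGroup A] [PolishSpace A]
    [MeasurableSpace A] [BorelSpace A]
    [Module R A]
    (hmeas : Measurable fun p : R × A => p.1 • p.2) :
    Continuous fun p : R × A => p.1 • p.2 := by
  have h1 : ∀ c : R, Continuous fun a : A => c • a := fun c =>
    continuous_of_measurable_addHom (fun x y => smul_add c x y)
      (hmeas.comp (measurable_const.prodMk measurable_id))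
  have h2 : ∀ a : A, Continuous fun c : R => c • a := fun a =>
    continuous_of_measurable_addHom (fun x y => add_smul x y a)
      (hmeas.comp (measurable_id.prodMk measurable_const))
  haveI : BaireSpace (R × A) := aux_baire
  haveI : SequentialSpace (R × A) := aux_seq
  have key : ∀ (u : ℕ → R × A) (q : R × A), Tendsto u atTop (𝓝 q) →
      Tendsto (fun n => (u n).1 • (u n).2) atTop (𝓝 (q.1 • q.2)) := by
    intro u q hu
    obtain ⟨D, hD, hcont⟩ := exists_residual_continuousOn hmeas
    have hpre : ∀ n, (fun y : R × A => y + (u n - q)) ⁻¹' D ∈ residual (R × A) := by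
      intro n
      have h := (Homeomorph.addRight (u n - q)).residual_map_eq
      rw [← h] at hD
      exact hD
    have hT : (D ∩ ⋂ n, (fun y : R × A => y + (u n - q)) ⁻¹' D) ∈ residual (R × A) :=
      inter_mem hD ((countable_iInter_mem).mpr hpre)
    obtain ⟨z, hzD, hzI⟩ := (dense_of_mem_residual hT).nonempty
    have hzn : ∀ n, z + (u n - q) ∈ D := fun n => mem_iInter.mp hzI n
    have hlim : Tendsto (fun n => z + (u n - q)) atTop (𝓝 z) := by
      have h : Tendsto (fun n => z + (u n - q)) atTop (𝓝 (z + (q - q))) :=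
        tendsto_const_nhds.add (hu.sub tendsto_const_nhds)
      simpa using h
    have hlim' : Tendsto (fun n => z + (u n - q)) atTop (𝓝[D] z) :=
      tendsto_nhdsWithin_of_tendsto_nhds_of_eventually_within _ hlim
        (Eventually.of_forall hzn)
    have hbig : Tendsto (fun n => (z + (u n - q)).1 • (z + (u n - q)).2) atTop
        (𝓝 (z.1 • z.2)) := Filter.Tendsto.comp (hcont z hzD) hlim'
    have hA : Tendsto (fun n => (u n).2 - q.2) atTop (𝓝 0) := by
      have h : Tendsto (fun n => (u n).2 - q.2) atTop (𝓝 (q.2 - q.2)) :=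
        ((continuous_snd.tendsto q).comp hu).sub tendsto_const_nhds
      simpa using h
    have hR : Tendsto (fun n => (u n).1 - q.1) atTop (𝓝 0) := by
      have h : Tendsto (fun n => (u n).1 - q.1) atTop (𝓝 (q.1 - q.1)) :=
        ((continuous_fst.tendsto q).comp hu).sub tendsto_const_nhds
      simpa using h
    have smulA : ∀ c : R, Tendsto (fun n => c • ((u n).2 - q.2)) atTop (𝓝 0) := by
      intro c
      have h := ((h1 c).tendsto 0).comp hA
      simpa [Function.comp_def] using h
    have smulR : ∀ a : A, Tendsto (fun n => ((u n).1 - q.1) • a) atTop (𝓝 0) := by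
      intro a
      have h := ((h2 a).tendsto 0).comp hR
      simpa [Function.comp_def] using h
    have hexp : (fun n => ((u n).1 - q.1) • ((u n).2 - q.2))
        = fun n => (z + (u n - q)).1 • (z + (u n - q)).2 - z.1 • z.2
          - z.1 • ((u n).2 - q.2) - ((u n).1 - q.1) • z.2 := by
      funext n
      simp only [Prod.fst_add, Prod.snd_add, Prod.fst_sub, Prod.snd_sub,
        add_smul, smul_add]
      abel
    have hX : Tendsto (fun n => ((u n).1 - q.1) • ((u n).2 - q.2)) atTop (𝓝 0) := by
      rw [hexp]
      have h := ((hbig.sub (tendsto_const_nhds :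
        Tendsto (fun _ : ℕ => z.1 • z.2) atTop (𝓝 (z.1 • z.2)))).sub
        (smulA z.1)).sub (smulR z.2)
      simpa using h
    have hfin : (fun n => (u n).1 • (u n).2)
        = fun n => q.1 • q.2 + q.1 • ((u n).2 - q.2) + ((u n).1 - q.1) • q.2
          + ((u n).1 - q.1) • ((u n).2 - q.2) := by
      funext n
      simp only [smul_sub, sub_smul]
      abel
    rw [hfin]
    have h := (((tendsto_const_nhds :
      Tendsto (fun _ : ℕ => q.1 • q.2) atTop (𝓝 (q.1 • q.2))).add
      (smulA q.1)).add (smulR q.2)).add hX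
    simpa using h
  have hs : SeqContinuous (fun p : R × A => p.1 • p.2) := fun u p hu => key u p hu
  exact hs.continuous
end
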